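/- For all integers n ≥ 0 and k ≥ 2, the counts h_{n,k,r} satisfy the convolution recurrence h_{n,k,m−1} = Σ_{j=0}^{n} h_{j,k−1,0} · h_{n−j,1,m−1}. -/

import Mathlib

open scoped Classical
open Finset

noncomputable section

/-- The set of positive nondecreasing sequences of length `n` bounded above by `b` is finite. -/
lemma boundedSeq_finite (n : ℕ) (b : ℕ → ℕ) :
    {p : Fin n → ℕ | Monotone p ∧ ∀ i : Fin n, 1 ≤ p i ∧ p i ≤ b i}.Finite := by
  have h : {p : Fin n → ℕ | Monotone p ∧ ∀ i : Fin n, 1 ≤ p i ∧ p i ≤ b i} ⊆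
      Set.pi Set.univ (fun i : Fin n => Set.Iic (b i)) := by
    intro p hp
    rw [Set.mem_pi]
    intro i _
    exact (hp.2 i).2
  exact (Set.Finite.pi fun i : Fin n => Set.finite_Iic (b (i : ℕ))).subset h

/-- The finset of nondecreasing sequences `p : Fin n → ℕ` of positive integers
with `p i ≤ b i` for all `i`. -/
def BSeq (n : ℕ) (b : ℕ → ℕ) : Finset (Fin n → ℕ) := (boundedSeq_finite n b).toFinset

/-- `PK m n` : the u-parking distributions of length `n`, i.e. nondecreasing sequences
of positive integers with `p i ≤ m*(i-1)+1` (here indexed from `0`, so `p i ≤ m*i+1`). -/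
def PK (m n : ℕ) : Finset (Fin n → ℕ) := BSeq n (fun i => m * i + 1)

/-- `luck p` : the number of indices `i` with `p i = m*(i-1)+1` (0-indexed: `m*i+1`). -/
def luck (m : ℕ) {n : ℕ} (p : Fin n → ℕ) : ℕ :=
  (Finset.univ.filter (fun i : Fin n => p i = m * (i : ℕ) + 1)).card

/-- `freq j p` = `ω_j(p)` : the number of indices `i` with `p i = j`. -/
def freq (j : ℕ) {n : ℕ} (p : Fin n → ℕ) : ℕ :=
  (Finset.univ.filter (fun i : Fin n => p i = j)).card

/-- `hcnt m n k r` = `h_{n,k,r}` : the number of nondecreasing sequences of positive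
integers with `p_i ≤ m*(i+k-1) - r` for `1 ≤ i ≤ n` (0-indexed: `p i ≤ m*(i+k) - r`). -/
def hcnt (m n k r : ℕ) : ℕ := (BSeq n (fun i => m * (i + k) - r)).card

/-- `Cnt m n k` = `C_{n,k}` : the number of `p ∈ PK m n` with `luck p = k`. -/
def Cnt (m n k : ℕ) : ℕ := ((PK m n).filter (fun p => luck m p = k)).card

/-- `Rpoly m n` = `R_n(q) = Σ_k C_{n,k} q^k ∈ ℤ[q]`. -/
def Rpoly (m n : ℕ) : Polynomial ℤ :=
  ∑ k ∈ Finset.range (n + 1), (Cnt m n k : Polynomial ℤ) * Polynomial.X ^ k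

/-- `hfull t k` : the complete homogeneous symmetric polynomial of degree `k`
in variables `q_0, …, q_{t-1}`, i.e. the sum of all monomials of total degree `k`. -/
def hfull (t k : ℕ) : MvPolynomial (Fin t) ℤ :=
  ∑ α ∈ Finset.Nat.antidiagonalTuple t k, ∏ i : Fin t, MvPolynomial.X i ^ α i

/-- `ffix m p ℓ` = `i_ℓ(p)` : the first fixed point of type `ℓ`, the smallest `k` with
`2 ≤ k ≤ n` and `p_k ≥ m*(k-2)+1+ℓ` (1-indexed), or `n+1` if there is none. -/
def ffix (m : ℕ) {n : ℕ} (p : Fin n → ℕ) (ℓ : ℕ) : ℕ :=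
  sInf ({k | 2 ≤ k ∧ ∃ i : Fin n, (i : ℕ) + 1 = k ∧ m * (k - 2) + 1 + ℓ ≤ p i} ∪ {n + 1})

/-- The extended first fixed points: `i_0 = 2`, `i_{m+1} = n+1`, and `i_ℓ = ffix m p ℓ`
for `1 ≤ ℓ ≤ m`. -/
def ffixE (m : ℕ) {n : ℕ} (p : Fin n → ℕ) (j : ℕ) : ℕ :=
  if j = 0 then 2 else if j = m + 1 then n + 1 else ffix m p j

/-- `pget p k` = `p_k` (1-indexed), `0` out of range. -/
def pget {n : ℕ} (p : Fin n → ℕ) (k : ℕ) : ℕ := if h : k - 1 < n then p ⟨k - 1, h⟩ else 0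

/-- The `(ℓ+1)`-st part `P_{ℓ+1}` (for `0 ≤ ℓ ≤ m`) of the first-return decomposition of `p`:
the list `(p_k - (p_{i_ℓ} - 1))` for `i_ℓ ≤ k ≤ i_{ℓ+1} - 1`. -/
def FRD (m : ℕ) {n : ℕ} (p : Fin n → ℕ) (ℓ : ℕ) : List ℕ :=
  (List.range (ffixE m p (ℓ + 1) - ffixE m p ℓ)).map
    (fun t => pget p (ffixE m p ℓ + t) - (pget p (ffixE m p ℓ) - 1))

/-- A list is a u-parking distribution: nondecreasing, with `l.get i ∈ [1, m*i+1]`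
(0-indexed). -/
def isPKlist (m : ℕ) (l : List ℕ) : Prop :=
  l.Pairwise (· ≤ ·) ∧ ∀ i : Fin l.length, 1 ≤ l.get i ∧ l.get i ≤ m * (i : ℕ) + 1

/-- `θ(p)` : the nondecreasing rearrangement of the concatenation of `p` with the list of
all `j ∈ {1, …, m*n-m+1}` with `j ≢ 1 (mod m)`. -/
def theta (m n : ℕ) (p : Fin n → ℕ) : List ℕ :=
  Multiset.sort
    ((List.ofFn p : Multiset ℕ) +
      (((List.range (m * n - m + 1)).map (· + 1)).filter
        (fun j => ¬ j ≡ 1 [MOD m]) : List ℕ)) (· ≤ ·)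

/-- Parking distributions on the `m`-caterpillar of length `n`, as nondecreasing lists. -/
def PKcat (m n : ℕ) : Set (List ℕ) :=
  {a | a.length = m * n - m + 1 ∧ a.Pairwise (· ≤ ·) ∧
       (∀ x ∈ a, 1 ≤ x ∧ x ≤ m * n - m + 1) ∧
       (∀ i : ℕ, 1 ≤ i → i ≤ n →
         m * (i - 1) + 1 ≤ (a.filter (fun x => x ≤ m * (i - 1) + 1)).length) ∧
       (∀ j : ℕ, 1 ≤ j → j ≤ m * n - m + 1 → ¬ j ≡ 1 [MOD m] → j ∈ a)}

lemma mem_BSeq {n : ℕ} {b : ℕ → ℕ} {p : Fin n → ℕ} :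
    p ∈ BSeq n b ↔ Monotone p ∧ ∀ i : Fin n, 1 ≤ p i ∧ p i ≤ b i := by
  rw [BSeq, Set.Finite.mem_toFinset]; rfl

/-- first index where the strict bound `m*(i+k-1)` is violated, or `n`. -/
def Jidx (m k : ℕ) {n : ℕ} (p : Fin n → ℕ) : ℕ :=
  sInf ({j | ∃ h : j < n, m * (j + k - 1) < p ⟨j, h⟩} ∪ {n})

lemma Jidx_le (m k : ℕ) {n : ℕ} (p : Fin n → ℕ) : Jidx m k p ≤ n :=
  Nat.sInf_le (Or.inr rfl)

lemma Jidx_spec' (m k : ℕ) {n : ℕ} (p : Fin n → ℕ) (i : Fin n) (h : Jidx m k p = (i : ℕ)) :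
    m * ((i : ℕ) + k - 1) < p i := by
  have hmem : Jidx m k p ∈ ({j | ∃ h : j < n, m * (j + k - 1) < p ⟨j, h⟩} ∪ {n} : Set ℕ) :=
    Nat.sInf_mem ⟨n, Or.inr rfl⟩
  rcases hmem with ⟨h', hlt⟩ | heq
  · have e : (⟨Jidx m k p, h'⟩ : Fin n) = i := Fin.ext h
    rw [← h]
    rw [← e]
    exact hlt
  · have : Jidx m k p = n := heq
    have := i.isLt
    omega

lemma lt_Jidx (m k : ℕ) {n : ℕ} (p : Fin n → ℕ) (i : Fin n) (h : (i : ℕ) < Jidx m k p) :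
    p i ≤ m * ((i : ℕ) + k - 1) := by
  have hnot := Nat.notMem_of_lt_sInf h
  simp only [Set.mem_union, Set.mem_setOf_eq, Set.mem_singleton_iff, not_or] at hnot
  have h2 := hnot.1
  push_neg at h2
  have h3 := h2 i.isLt
  simpa using h3

example : True := trivial


/-- glue a sequence of length `j` with a shifted sequence of length `n - j`. -/
def merge (m k n j : ℕ) (hj : j ≤ n) (q : (Fin j → ℕ) × (Fin (n - j) → ℕ)) :
    Fin n → ℕ := fun i =>
  if h : (i : ℕ) < j then q.1 ⟨(i : ℕ), h⟩
  else q.2 ⟨(i : ℕ) - j, by have := i.isLt; omega⟩ + m * (j + k - 1)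

lemma merge_lt (m k n j : ℕ) (hj : j ≤ n) (q : (Fin j → ℕ) × (Fin (n - j) → ℕ))
    (i : Fin n) (h : (i : ℕ) < j) : merge m k n j hj q i = q.1 ⟨(i : ℕ), h⟩ := by
  simp only [merge]
  rw [dif_pos h]

lemma merge_ge (m k n j : ℕ) (hj : j ≤ n) (q : (Fin j → ℕ) × (Fin (n - j) → ℕ))
    (i : Fin n) (h : ¬ (i : ℕ) < j) :
    merge m k n j hj q i
      = q.2 ⟨(i : ℕ) - j, by have := i.isLt; omega⟩ + m * (j + k - 1) := by
  simp only [merge]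
  rw [dif_neg h]

set_option maxHeartbeats 1000000 in
lemma fiber_card (m k n j : ℕ) (hm : 1 ≤ m) (hk : 2 ≤ k) (hj : j ≤ n) :
    ((BSeq n (fun i => m * (i + k) - (m - 1))).filter (fun p => Jidx m k p = j)).card
      = (BSeq j (fun i => m * (i + k - 1))).card * (BSeq (n - j) (fun i => m * i + 1)).card := by
  have hB : ∀ i : ℕ, m * (i + k) - (m - 1) = m * (i + k - 1) + 1 := by
    intro i
    have h1 : m * (i + k) = m * (i + k - 1) + m := by
      have h2 : i + k = i + k - 1 + 1 := by omega
      calc m * (i + k) = m * (i + k - 1 + 1) := by rw [← h2]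
        _ = m * (i + k - 1) + m := Nat.mul_succ m _
    omega
  rw [← Finset.card_product]
  apply Finset.card_nbij'
    (i := fun p => (fun i : Fin j => p (Fin.castLE hj i),
                    fun i : Fin (n - j) => p ⟨j + (i : ℕ), by have := i.isLt; omega⟩
                      - m * (j + k - 1)))
    (j := merge m k n j hj)
  · -- forward maps into product
    intro p hp
    rw [Finset.mem_coe, Finset.mem_filter] at hp
    obtain ⟨hpmem, hJ⟩ := hp
    rw [mem_BSeq] at hpmem
    obtain ⟨hmono, hbd⟩ := hpmem
    rw [Finset.mem_coe, Finset.mem_product]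
    constructor
    · rw [mem_BSeq]
      constructor
      · intro a b hab
        exact hmono (show Fin.castLE hj a ≤ Fin.castLE hj b from hab)
      · intro i
        refine ⟨(hbd _).1, ?_⟩
        have := lt_Jidx m k p (Fin.castLE hj i) (by rw [hJ]; exact i.isLt)
        simpa using this
    · rw [mem_BSeq]
      constructor
      · intro a b hab
        apply Nat.sub_le_sub_right
        apply hmono
        simp only [Fin.mk_le_mk]
        exact Nat.add_le_add_left (Fin.le_def.mp hab) j
      · intro i
        have hjn : j < n := by have := i.isLt; omega
        have hpj : m * (j + k - 1) < p ⟨j, hjn⟩ :=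
          Jidx_spec' m k p ⟨j, hjn⟩ (by simpa using hJ)
        have hle : p ⟨j, hjn⟩ ≤ p ⟨j + (i : ℕ), by have := i.isLt; omega⟩ :=
          hmono (by simp [Fin.le_def])
        have hub : p ⟨j + (i : ℕ), by have := i.isLt; omega⟩
            ≤ m * (j + k - 1) + (m * (i : ℕ) + 1) := by
          have hb := (hbd ⟨j + (i : ℕ), by have := i.isLt; omega⟩).2
          simp only [hB] at hb
          have he : (j + (i : ℕ)) + k - 1 = (j + k - 1) + (i : ℕ) := by omega
          rw [he, Nat.mul_add] at hb
          omega
        constructor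
        · exact Nat.le_sub_of_add_le (by omega)
        · exact Nat.sub_le_of_le_add (by omega)
  · -- backward maps into filter
    intro q hq
    rw [Finset.mem_coe, Finset.mem_product] at hq
    obtain ⟨ha, hb⟩ := hq
    rw [mem_BSeq] at ha hb
    obtain ⟨hamono, habd⟩ := ha
    obtain ⟨hbmono, hbbd⟩ := hb
    rw [Finset.mem_coe, Finset.mem_filter]
    constructor
    · rw [mem_BSeq]
      constructor
      · intro x y hxy
        by_cases hx : (x : ℕ) < j
        · by_cases hy : (y : ℕ) < j
          · rw [merge_lt m k n j hj q x hx, merge_lt m k n j hj q y hy]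
            exact hamono (Fin.mk_le_mk.mpr (Fin.le_def.mp hxy))
          · rw [merge_lt m k n j hj q x hx, merge_ge m k n j hj q y hy]
            have h1 : q.1 ⟨(x : ℕ), hx⟩ ≤ m * ((x : ℕ) + k - 1) := (habd _).2
            have h2 : m * ((x : ℕ) + k - 1) ≤ m * (j + k - 1) :=
              Nat.mul_le_mul_left m (by omega)
            have h3 : 1 ≤ q.2 ⟨(y : ℕ) - j, by have := y.isLt; omega⟩ := (hbbd _).1
            omega
        · have hy : ¬ (y : ℕ) < j := by
            have := Fin.le_def.mp hxy; omega
          rw [merge_ge m k n j hj q x hx, merge_ge m k n j hj q y hy]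
          have h4 : q.2 ⟨(x : ℕ) - j, by have := x.isLt; omega⟩
              ≤ q.2 ⟨(y : ℕ) - j, by have := y.isLt; omega⟩ := by
            apply hbmono
            simp only [Fin.mk_le_mk]
            have := Fin.le_def.mp hxy; omega
          omega
      · intro i
        by_cases h : (i : ℕ) < j
        · rw [merge_lt m k n j hj q i h]
          refine ⟨(habd _).1, ?_⟩
          have h1 : q.1 ⟨(i : ℕ), h⟩ ≤ m * ((i : ℕ) + k - 1) := (habd _).2
          rw [hB]
          omega
        · rw [merge_ge m k n j hj q i h]
          have h1 : 1 ≤ q.2 ⟨(i : ℕ) - j, by have := i.isLt; omega⟩ := (hbbd _).1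
          have h2 : q.2 ⟨(i : ℕ) - j, by have := i.isLt; omega⟩ ≤ m * ((i : ℕ) - j) + 1 :=
            (hbbd _).2
          have he : m * ((i : ℕ) + k - 1) = m * (j + k - 1) + m * ((i : ℕ) - j) := by
            rw [← Nat.mul_add]; congr 1; omega
          rw [hB]
          omega
    · -- Jidx = j
      apply le_antisymm
      · apply Nat.sInf_le
        by_cases hjn : j < n
        · refine Or.inl ⟨hjn, ?_⟩
          have hne : ¬ (((⟨j, hjn⟩ : Fin n) : ℕ) < j) := by simp
          rw [merge_ge m k n j hj q ⟨j, hjn⟩ hne]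
          have h1 : 1 ≤ q.2 ⟨(((⟨j, hjn⟩ : Fin n) : ℕ)) - j, by simpa using hjn⟩ := (hbbd _).1
          omega
        · exact Or.inr (by simp only [Set.mem_singleton_iff]; omega)
      · apply le_csInf ⟨n, Or.inr rfl⟩
        intro x hx
        rcases hx with ⟨hxn, hlt⟩ | hxe
        · by_contra hcon
          push_neg at hcon
          have hx2 : ((⟨x, hxn⟩ : Fin n) : ℕ) < j := hcon
          rw [merge_lt m k n j hj q ⟨x, hxn⟩ hx2] at hlt
          have h4 : q.1 ⟨x, hx2⟩ ≤ m * (x + k - 1) := (habd ⟨x, hx2⟩).2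
          have h5 : q.1 ⟨((⟨x, hxn⟩ : Fin n) : ℕ), hx2⟩ = q.1 ⟨x, hx2⟩ := rfl
          rw [h5] at hlt
          omega
        · have : x = n := hxe
          omega
  · -- left inverse
    intro p hp
    rw [Finset.mem_coe, Finset.mem_filter] at hp
    obtain ⟨hpmem, hJ⟩ := hp
    rw [mem_BSeq] at hpmem
    obtain ⟨hmono, hbd⟩ := hpmem
    funext i
    by_cases h : (i : ℕ) < j
    · rw [merge_lt m k n j hj _ i h]
      rfl
    · rw [merge_ge m k n j hj _ i h]
      show p ⟨j + ((i : ℕ) - j), _⟩ - m * (j + k - 1) + m * (j + k - 1) = p i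
      have e : ∀ hh : j + ((i : ℕ) - j) < n, p ⟨j + ((i : ℕ) - j), hh⟩ = p i := by
        intro hh
        congr 1
        ext
        simp
        omega
      rw [e]
      have hjn : j < n := by have := i.isLt; omega
      have hpj : m * (j + k - 1) < p ⟨j, hjn⟩ :=
        Jidx_spec' m k p ⟨j, hjn⟩ (by simpa using hJ)
      have hle : p ⟨j, hjn⟩ ≤ p i := hmono (by simp [Fin.le_def]; omega)
      exact Nat.sub_add_cancel (le_trans (Nat.le_of_lt hpj) hle)
  · -- right inverse
    intro q hq
    obtain ⟨a, b⟩ := q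
    refine Prod.ext ?_ ?_
    · funext i
      show merge m k n j hj (a, b) (Fin.castLE hj i) = a i
      rw [merge_lt m k n j hj (a, b) (Fin.castLE hj i) i.isLt]
      rfl
    · funext i
      show merge m k n j hj (a, b) ⟨j + (i : ℕ), _⟩ - m * (j + k - 1) = b i
      have hc : ¬ (((⟨j + (i : ℕ), by have := i.isLt; omega⟩ : Fin n) : ℕ) < j) := by
        simp
      rw [merge_ge m k n j hj (a, b) _ hc]
      have e : ∀ hh : j + (i : ℕ) - j < n - j, (⟨j + (i : ℕ) - j, hh⟩ : Fin (n - j)) = i := by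
        intro hh
        ext
        simp
      rw [e]
      show b i + m * (j + k - 1) - m * (j + k - 1) = b i
      simp


theorem stmt3 (m : ℕ) (hm : 1 ≤ m) (n k : ℕ) (hk : 2 ≤ k) :
    hcnt m n k (m - 1) =
      ∑ j ∈ Finset.range (n + 1), hcnt m j (k - 1) 0 * hcnt m (n - j) 1 (m - 1) := by
  have hB1 : (fun i : ℕ => m * (i + (k - 1)) - 0) = fun i : ℕ => m * (i + k - 1) := by
    funext i
    rw [Nat.sub_zero]
    congr 1
    omega
  have hB2 : (fun i : ℕ => m * (i + 1) - (m - 1)) = fun i : ℕ => m * i + 1 := by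
    funext i
    have : m * (i + 1) = m * i + m := by ring
    omega
  unfold hcnt
  rw [Finset.card_eq_sum_card_fiberwise
    (f := fun p => Jidx m k p) (t := Finset.range (n + 1))
    (fun p _ => Finset.mem_range.mpr (Nat.lt_succ_of_le (Jidx_le m k p)))]
  apply Finset.sum_congr rfl
  intro j hjmem
  have hj : j ≤ n := Nat.lt_succ_iff.mp (Finset.mem_range.mp hjmem)
  rw [hB1, hB2]
  exact fiber_card m k n j hm hk hj


end
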